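/- As t → +∞, e^{2πt}·φ'_eff(t)/t converges to −8π; that is, φ'_eff(t) ∼ −8πt·e^{−2πt} as t → ∞. -/

import Mathlib

open Real Filter

/-- The derivative of the wall-interaction force `φ(s) = s/sinh²(πs)`, namely
`φ'(s) = 1/sinh²(πs) − 2πs·cosh(πs)/sinh³(πs)`. -/
noncomputable def phi' (s : ℝ) : ℝ :=
  1 / (Real.sinh (Real.pi * s)) ^ 2
    - 2 * Real.pi * s * Real.cosh (Real.pi * s) / (Real.sinh (Real.pi * s)) ^ 3

lemma sinh_lb {s : ℝ} (hs : 1 ≤ s) : exp (π * s) / 4 ≤ Real.sinh (π * s) := by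
  rw [Real.sinh_eq]
  have h2 : Real.exp (-(π*s)) ≤ 1 := by
    rw [Real.exp_le_one_iff]; nlinarith [Real.pi_gt_three]
  have h3 : (2:ℝ) ≤ Real.exp (π*s) := by
    calc (2:ℝ) ≤ Real.exp 1 := by nlinarith [Real.add_one_le_exp 1]
    _ ≤ Real.exp (π*s) := Real.exp_le_exp.2 (by nlinarith [Real.pi_gt_three])
  nlinarith

lemma cosh_ub {x : ℝ} (hx : 0 ≤ x) : Real.cosh x ≤ Real.exp x := by
  rw [Real.cosh_eq]
  have : Real.exp (-x) ≤ Real.exp x := Real.exp_le_exp.2 (by linarith)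
  linarith

lemma phi'_bound {s : ℝ} (hs : 1 ≤ s) :
    |phi' s| ≤ (16 + 128 * π) * s * Real.exp (-(2 * π * s)) := by
  have hπ := Real.pi_gt_three
  have hE : (0:ℝ) < Real.exp (π * s) := Real.exp_pos _
  have h2 := sinh_lb hs
  have hsinh : 0 < Real.sinh (π * s) := lt_of_lt_of_le (by positivity) h2
  have h3 : Real.cosh (π * s) ≤ Real.exp (π * s) := cosh_ub (by nlinarith)
  have hcosh : 0 < Real.cosh (π * s) := Real.cosh_pos _
  have hexp2 : Real.exp (-(2 * π * s)) = 1 / (Real.exp (π*s))^2 := by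
    rw [Real.exp_neg, show (2:ℝ) * π * s = π*s + π*s by ring, Real.exp_add, sq, one_div]
  have hsq : (Real.exp (π*s))^2 / 16 ≤ (Real.sinh (π*s))^2 := by nlinarith
  have ha : 1 / (Real.sinh (π * s)) ^ 2 ≤ 16 * Real.exp (-(2*π*s)) := by
    have := one_div_le_one_div_of_le (by positivity : (0:ℝ) < (Real.exp (π*s))^2/16) hsq
    rw [hexp2]
    calc 1 / (Real.sinh (π*s))^2 ≤ 1 / ((Real.exp (π*s))^2/16) := this
    _ = 16 * (1 / (Real.exp (π*s))^2) := by field_simp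
  have hcube : (Real.exp (π*s))^3 / 64 ≤ (Real.sinh (π*s))^3 := by nlinarith
  have hb : 2 * π * s * Real.cosh (π * s) / (Real.sinh (π * s)) ^ 3
      ≤ 128 * π * s * Real.exp (-(2*π*s)) := by
    have hd : 2 * π * s * Real.cosh (π*s) / (Real.sinh (π*s))^3
        ≤ 2 * π * s * Real.exp (π*s) / ((Real.exp (π*s))^3/64) :=
      div_le_div₀ (by positivity)
        (by nlinarith [mul_le_mul_of_nonneg_left h3 (show (0:ℝ) ≤ 2*π*s by positivity)])
        (by positivity) hcube
    calc 2 * π * s * Real.cosh (π*s) / (Real.sinh (π*s))^3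
        ≤ 2 * π * s * Real.exp (π*s) / ((Real.exp (π*s))^3/64) := hd
      _ = 128 * π * s * (1 / (Real.exp (π*s))^2) := by field_simp; ring
      _ = 128 * π * s * Real.exp (-(2*π*s)) := by rw [hexp2]
  have hA : 0 < 1 / (Real.sinh (π * s)) ^ 2 := by positivity
  have hB : 0 < 2 * π * s * Real.cosh (π * s) / (Real.sinh (π * s)) ^ 3 := by positivity
  have habs : |phi' s| ≤ 1 / (Real.sinh (π * s)) ^ 2
      + 2 * π * s * Real.cosh (π * s) / (Real.sinh (π * s)) ^ 3 := by
    rw [phi']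
    calc |1 / (Real.sinh (π*s))^2 - 2*π*s*Real.cosh (π*s)/(Real.sinh (π*s))^3|
        ≤ |1 / (Real.sinh (π*s))^2| + |2*π*s*Real.cosh (π*s)/(Real.sinh (π*s))^3| := abs_sub _ _
      _ = _ := by rw [abs_of_pos hA, abs_of_pos hB]
  have hexppos : 0 < Real.exp (-(2*π*s)) := Real.exp_pos _
  nlinarith [hexppos]

lemma alg_identity (x t p : ℝ) (hx : 1 < x) (ht : t ≠ 0) :
    x^2 * (1/(((x - x⁻¹)/2)^2) - 2*p*t*((x+x⁻¹)/2)/(((x-x⁻¹)/2)^3)) / t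
      = 4/(t*(1-(x^2)⁻¹)^2) - 8*p*(1+(x^2)⁻¹)/(1-(x^2)⁻¹)^3 := by
  have hx0 : x ≠ 0 := by positivity
  have hs : x^2 - 1 ≠ 0 := by nlinarith
  have e1 : x - x⁻¹ = (x^2 - 1)/x := by field_simp
  have e2 : 1 - (x^2)⁻¹ = (x^2 - 1)/x^2 := by field_simp
  have e3 : 1 + (x^2)⁻¹ = (x^2 + 1)/x^2 := by field_simp
  have e4 : x + x⁻¹ = (x^2 + 1)/x := by field_simp
  rw [e1, e2, e3, e4]
  field_simp
  ring

lemma main_identity {t : ℝ} (ht : 1 ≤ t) :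
    Real.exp (2 * π * t) * phi' t / t
      = 4 / (t * (1 - Real.exp (-(2*π*t)))^2)
        - 8 * π * (1 + Real.exp (-(2*π*t))) / (1 - Real.exp (-(2*π*t)))^3 := by
  have hπ := Real.pi_gt_three
  have ht0 : t ≠ 0 := by linarith
  have hE1 : 1 < Real.exp (π * t) := by
    rw [show (1:ℝ) = Real.exp 0 by simp]; exact Real.exp_lt_exp.2 (by nlinarith)
  have hsinh : Real.sinh (π * t) = (Real.exp (π*t) - (Real.exp (π*t))⁻¹) / 2 := by
    rw [Real.sinh_eq, Real.exp_neg]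
  have hcosh : Real.cosh (π * t) = (Real.exp (π*t) + (Real.exp (π*t))⁻¹) / 2 := by
    rw [Real.cosh_eq, Real.exp_neg]
  have h2 : Real.exp (2 * π * t) = (Real.exp (π*t))^2 := by
    rw [show (2:ℝ) * π * t = π*t + π*t by ring, Real.exp_add, sq]
  have hm2 : Real.exp (-(2 * π * t)) = ((Real.exp (π*t))^2)⁻¹ := by
    rw [Real.exp_neg, h2]
  rw [phi', hsinh, hcosh, h2, hm2]
  exact alg_identity _ _ _ hE1 ht0

lemma summable_shift (c : ℕ) {r : ℝ} (h0 : 0 < r) (h1 : r < 1) :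
    Summable (fun k : ℕ => ((k:ℝ) + c)^3 * r^k) := by
  have hr : ‖r‖ < 1 := by rw [Real.norm_eq_abs, abs_of_pos h0]; exact h1
  have h := (summable_pow_mul_geometric_of_norm_lt_one (R := ℝ) 3 hr).comp_injective
    (add_left_injective c)
  have h2 := h.mul_left ((r^c)⁻¹)
  refine h2.congr fun k => ?_
  simp only [Function.comp]
  push_cast
  rw [pow_add]
  field_simp

lemma rlt1 {t : ℝ} (ht : 1 ≤ t) : Real.exp (-(2*π*t)) < 1 := by
  rw [Real.exp_lt_one_iff]
  nlinarith [Real.pi_gt_three]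

lemma term_bound {t : ℝ} (ht : 1 ≤ t) (k : ℕ) :
    |((k:ℝ)+1)^2 * phi' (((k:ℝ)+1) * t)|
      ≤ (16 + 128*π) * t * (((k:ℝ)+1)^3 * (Real.exp (-(2*π*t)))^(k+1)) := by
  have hπ := Real.pi_gt_three
  have hk1 : (1:ℝ) ≤ ((k:ℝ)+1) := by linarith [Nat.cast_nonneg (α:=ℝ) k]
  have hs : (1:ℝ) ≤ ((k:ℝ)+1) * t := by nlinarith
  have hb := phi'_bound hs
  have hexp : Real.exp (-(2*π*(((k:ℝ)+1)*t))) = (Real.exp (-(2*π*t)))^(k+1) := by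
    rw [← Real.exp_nat_mul]
    congr 1
    push_cast
    ring
  rw [abs_mul, abs_of_nonneg (by positivity : (0:ℝ) ≤ ((k:ℝ)+1)^2)]
  calc ((k:ℝ)+1)^2 * |phi' (((k:ℝ)+1)*t)|
      ≤ ((k:ℝ)+1)^2 * ((16 + 128*π) * (((k:ℝ)+1)*t) * Real.exp (-(2*π*(((k:ℝ)+1)*t)))) := by
        apply mul_le_mul_of_nonneg_left _ (by positivity)
        exact hb
    _ = (16 + 128*π) * t * (((k:ℝ)+1)^3 * (Real.exp (-(2*π*t)))^(k+1)) := by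
        rw [hexp]; ring

lemma summable_terms {t : ℝ} (ht : 1 ≤ t) :
    Summable (fun k : ℕ => ((k:ℝ)+1)^2 * phi' (((k:ℝ)+1) * t)) := by
  have hr0 : (0:ℝ) < Real.exp (-(2*π*t)) := Real.exp_pos _
  have hr1 := rlt1 ht
  have hg : Summable (fun k : ℕ =>
      (16 + 128*π) * t * (((k:ℝ)+1)^3 * (Real.exp (-(2*π*t)))^(k+1))) := by
    have h := (summable_shift 1 hr0 hr1).mul_left ((16 + 128*π) * t * Real.exp (-(2*π*t)))
    refine h.congr fun k => ?_
    push_cast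
    rw [pow_succ]
    ring
  exact Summable.of_norm_bounded hg fun k => term_bound ht k

/-- The constant `M = ∑ (j+2)³ e^{-π(j+1)}`. -/
noncomputable def Mconst : ℝ := ∑' j : ℕ, ((j:ℝ)+2)^3 * (Real.exp (-π))^(j+1)

lemma summable_M : Summable (fun j : ℕ => ((j:ℝ)+2)^3 * (Real.exp (-π))^(j+1)) := by
  have h0 : (0:ℝ) < Real.exp (-π) := Real.exp_pos _
  have h1 : Real.exp (-π) < 1 := by
    rw [Real.exp_lt_one_iff]; nlinarith [Real.pi_gt_three]
  have h := (summable_shift 2 h0 h1).mul_left (Real.exp (-π))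
  refine h.congr fun k => ?_
  push_cast
  rw [pow_succ]
  ring

lemma tail_term_bound {t : ℝ} (ht : 1 ≤ t) (j : ℕ) :
    |((j:ℝ)+2)^2 * phi' (((j:ℝ)+2) * t)|
      ≤ (16 + 128*π) * (t * Real.exp (-(2*π*t)) * Real.exp (-(π*t)))
          * (((j:ℝ)+2)^3 * (Real.exp (-π))^(j+1)) := by
  have hπ := Real.pi_gt_three
  have hj : (0:ℝ) ≤ (j:ℝ) := Nat.cast_nonneg _
  have hs : (1:ℝ) ≤ ((j:ℝ)+2) * t := by nlinarith
  have hb := phi'_bound hs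
  have hexp1 : Real.exp (-(2*π*(((j:ℝ)+2)*t)))
      ≤ Real.exp (-(2*π*t)) * Real.exp (-(π*t)) * (Real.exp (-π))^(j+1) := by
    rw [← Real.exp_nat_mul, ← Real.exp_add, ← Real.exp_add]
    apply Real.exp_le_exp.2
    push_cast
    nlinarith [mul_nonneg Real.pi_nonneg
      (mul_nonneg (show (0:ℝ) ≤ 2*(j:ℝ)+1 by linarith) (show (0:ℝ) ≤ t-1 by linarith)),
      mul_nonneg Real.pi_nonneg hj]
  rw [abs_mul, abs_of_nonneg (by positivity : (0:ℝ) ≤ ((j:ℝ)+2)^2)]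
  calc ((j:ℝ)+2)^2 * |phi' (((j:ℝ)+2)*t)|
      ≤ ((j:ℝ)+2)^2 * ((16 + 128*π) * (((j:ℝ)+2)*t) * Real.exp (-(2*π*(((j:ℝ)+2)*t)))) :=
        mul_le_mul_of_nonneg_left hb (by positivity)
    _ ≤ ((j:ℝ)+2)^2 * ((16 + 128*π) * (((j:ℝ)+2)*t)
          * (Real.exp (-(2*π*t)) * Real.exp (-(π*t)) * (Real.exp (-π))^(j+1))) := by
        apply mul_le_mul_of_nonneg_left _ (by positivity)
        apply mul_le_mul_of_nonneg_left hexp1 (by positivity)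
    _ = (16 + 128*π) * (t * Real.exp (-(2*π*t)) * Real.exp (-(π*t)))
          * (((j:ℝ)+2)^3 * (Real.exp (-π))^(j+1)) := by ring

lemma summable_tail {t : ℝ} (ht : 1 ≤ t) :
    Summable (fun j : ℕ => ((j:ℝ)+2)^2 * phi' (((j:ℝ)+2) * t)) := by
  exact Summable.of_norm_bounded
    (summable_M.mul_left ((16 + 128*π) * (t * Real.exp (-(2*π*t)) * Real.exp (-(π*t)))))
    fun j => tail_term_bound ht j

lemma tail_bound {t : ℝ} (ht : 1 ≤ t) :
    |∑' j : ℕ, ((j:ℝ)+2)^2 * phi' (((j:ℝ)+2) * t)|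
      ≤ (16 + 128*π) * (t * Real.exp (-(2*π*t)) * Real.exp (-(π*t))) * Mconst := by
  have h1 : |∑' j : ℕ, ((j:ℝ)+2)^2 * phi' (((j:ℝ)+2) * t)|
      ≤ ∑' j : ℕ, |((j:ℝ)+2)^2 * phi' (((j:ℝ)+2) * t)| := by
    have h := norm_tsum_le_tsum_norm (f := fun j : ℕ => ((j:ℝ)+2)^2 * phi' (((j:ℝ)+2) * t))
      ((summable_tail ht).norm)
    simp only [Real.norm_eq_abs] at h
    exact h
  have h2 : (∑' j : ℕ, |((j:ℝ)+2)^2 * phi' (((j:ℝ)+2) * t)|)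
      ≤ ∑' j : ℕ, (16 + 128*π) * (t * Real.exp (-(2*π*t)) * Real.exp (-(π*t)))
          * (((j:ℝ)+2)^3 * (Real.exp (-π))^(j+1)) :=
    Summable.tsum_le_tsum (fun j => tail_term_bound ht j) (summable_tail ht).abs
      (summable_M.mul_left _)
  have h3 : (∑' j : ℕ, (16 + 128*π) * (t * Real.exp (-(2*π*t)) * Real.exp (-(π*t)))
        * (((j:ℝ)+2)^3 * (Real.exp (-π))^(j+1)))
      = (16 + 128*π) * (t * Real.exp (-(2*π*t)) * Real.exp (-(π*t))) * Mconst := by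
    rw [tsum_mul_left, Mconst]
  linarith

lemma exp_neg_tendsto : Tendsto (fun t : ℝ => Real.exp (-(2*π*t))) atTop (nhds 0) := by
  have h1 : Tendsto (fun t : ℝ => 2*π*t) atTop atTop :=
    Tendsto.const_mul_atTop (by positivity) tendsto_id
  exact Real.tendsto_exp_atBot.comp (tendsto_neg_atTop_atBot.comp h1)

lemma exp_neg_pi_tendsto : Tendsto (fun t : ℝ => Real.exp (-(π*t))) atTop (nhds 0) := by
  have h1 : Tendsto (fun t : ℝ => π*t) atTop atTop :=
    Tendsto.const_mul_atTop Real.pi_pos tendsto_id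
  exact Real.tendsto_exp_atBot.comp (tendsto_neg_atTop_atBot.comp h1)

lemma main_rhs_limit :
    Tendsto (fun t : ℝ => 4 / (t * (1 - Real.exp (-(2*π*t)))^2)
        - 8 * π * (1 + Real.exp (-(2*π*t))) / (1 - Real.exp (-(2*π*t)))^3)
      atTop (nhds (-(8*π))) := by
  have hv := exp_neg_tendsto
  have hone : Tendsto (fun t : ℝ => (1 - Real.exp (-(2*π*t)))^2) atTop (nhds 1) := by
    have := (tendsto_const_nhds (x := (1:ℝ)) (f := atTop)).sub hv
    rw [sub_zero] at this
    simpa using this.pow 2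
  have hdenom : Tendsto (fun t : ℝ => t * (1 - Real.exp (-(2*π*t)))^2) atTop atTop :=
    Tendsto.atTop_mul_pos one_pos tendsto_id hone
  have hpart1 : Tendsto (fun t : ℝ => 4 / (t * (1 - Real.exp (-(2*π*t)))^2)) atTop (nhds 0) :=
    Tendsto.div_atTop tendsto_const_nhds hdenom
  have hnum : Tendsto (fun t : ℝ => 8 * π * (1 + Real.exp (-(2*π*t)))) atTop (nhds (8*π)) := by
    have := (tendsto_const_nhds (x := (1:ℝ)) (f := atTop)).add hv
    rw [add_zero] at this
    have h2 := this.const_mul (8*π)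
    simpa using h2
  have hden3 : Tendsto (fun t : ℝ => (1 - Real.exp (-(2*π*t)))^3) atTop (nhds 1) := by
    have := (tendsto_const_nhds (x := (1:ℝ)) (f := atTop)).sub hv
    rw [sub_zero] at this
    simpa using this.pow 3
  have hpart2 : Tendsto (fun t : ℝ => 8 * π * (1 + Real.exp (-(2*π*t))) / (1 - Real.exp (-(2*π*t)))^3)
      atTop (nhds (8*π)) := by
    have := hnum.div hden3 one_ne_zero
    simpa [Pi.div_def] using this
  have := hpart1.sub hpart2
  rw [zero_sub] at this
  exact this

lemma tail_limit :
    Tendsto (fun t : ℝ => Real.exp (2*π*t)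
        * (∑' j : ℕ, ((j:ℝ)+2)^2 * phi' (((j:ℝ)+2) * t)) / t) atTop (nhds 0) := by
  apply squeeze_zero_norm' (a := fun t => (16 + 128*π) * Mconst * Real.exp (-(π*t)))
  · filter_upwards [eventually_ge_atTop (1:ℝ)] with t ht
    have ht0 : (0:ℝ) < t := by linarith
    set T := ∑' j : ℕ, ((j:ℝ)+2)^2 * phi' (((j:ℝ)+2) * t) with hT
    have habs : ‖Real.exp (2*π*t) * T / t‖ = Real.exp (2*π*t) * |T| / t := by
      rw [Real.norm_eq_abs, abs_div, abs_mul, abs_of_pos (Real.exp_pos _), abs_of_pos ht0]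
    rw [habs]
    have hb := tail_bound ht
    have hMnn : 0 ≤ (16 + 128*π) * (t * Real.exp (-(2*π*t)) * Real.exp (-(π*t))) * Mconst := by
      exact le_trans (abs_nonneg _) hb
    calc Real.exp (2*π*t) * |T| / t
        ≤ Real.exp (2*π*t) * ((16 + 128*π) * (t * Real.exp (-(2*π*t)) * Real.exp (-(π*t))) * Mconst) / t := by
          exact div_le_div_of_nonneg_right
            (mul_le_mul_of_nonneg_left hb (Real.exp_pos _).le) ht0.le
      _ = (16 + 128*π) * Mconst * Real.exp (-(π*t)) := by
          have hexpid : Real.exp (2*π*t) * Real.exp (-(2*π*t)) = 1 := by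
            rw [← Real.exp_add]; simp
          rw [div_eq_iff (ne_of_gt ht0)]
          linear_combination ((16 + 128*π) * Mconst * Real.exp (-(π*t)) * t) * hexpid
  · have := exp_neg_pi_tendsto.const_mul ((16 + 128*π) * Mconst)
    simpa using this

/-- As `t → +∞`, `e^{2πt}·φ'_eff(t)/t → −8π`, i.e. `φ'_eff(t) ∼ −8πt·e^{−2πt}` at
infinity, where `φ'_eff(t) = Σ_{k=1}^∞ k²·φ'(kt)`. -/
theorem stmt13 :
    Tendsto (fun t : ℝ =>
        Real.exp (2 * Real.pi * t) * (∑' k : ℕ, ((k : ℝ) + 1) ^ 2 * phi' (((k : ℝ) + 1) * t)) / t)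
      atTop (nhds (-(8 * Real.pi))) := by
  have hA : Tendsto (fun t : ℝ => Real.exp (2*π*t) * phi' t / t) atTop (nhds (-(8*π))) := by
    apply Tendsto.congr' _ main_rhs_limit
    filter_upwards [eventually_ge_atTop (1:ℝ)] with t ht
    exact (main_identity ht).symm
  have hB := tail_limit
  have hsum := hA.add hB
  rw [add_zero] at hsum
  apply Tendsto.congr' _ hsum
  filter_upwards [eventually_ge_atTop (1:ℝ)] with t ht
  have hsplit : (∑' k : ℕ, ((k : ℝ) + 1) ^ 2 * phi' (((k : ℝ) + 1) * t))
      = phi' t + ∑' j : ℕ, ((j:ℝ)+2)^2 * phi' (((j:ℝ)+2) * t) := by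
    rw [Summable.tsum_eq_zero_add (summable_terms ht)]
    congr 1
    · norm_num
    · apply tsum_congr
      intro j
      push_cast
      ring_nf
  rw [hsplit]
  ring
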